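/- arXiv:2602.11557 — 3 statements merged into one kernel-verified Lean document; each statement's English description precedes it below -/
import Mathlib

section
/- Suppose ‖x_i‖_1 ≤ R for all i ∈ {1,…,n}, where R > 0, and that n = m·b for integers m ≥ 1 and b ≥ 1. Fix η_0 > 0 and let 0 < η ≤ η_0. Let W ∈ ℝ^{k×d}, let B ⊆ {1,…,n} with |B| = b, and set ∇L_B(W) = (1/b)∑_{i∈B} g_i(W). Let Δ ∈ ℝ^{k×d} be any ℓ_∞ steepest descent direction for the mini-batch gradient, i.e., ‖Δ‖_max ≤ 1 and ⟨∇L_B(W), Δ⟩ = ‖∇L_B(W)‖_1. Then the cross-entropy loss satisfies the descent inequality L(W − ηΔ) ≤ L(W) − η (γ − 4(m−1)R − 2η R² e^{2Rη_0}) · G(W), where γ = sup{ min_{i ∈ {1,…,n}, c ≠ y_i} (e_{y_i} − e_c)ᵀ W' x_i : W' ∈ ℝ^{k×d}, ‖W'‖_max ≤ 1 }. -/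
open Finset Filter

/-- Softmax map on `ℝ^k`. -/
noncomputable def softmax {k : ℕ} (z : Fin k → ℝ) (c : Fin k) : ℝ :=
  Real.exp (z c) / ∑ j, Real.exp (z j)

/-- Logits `W x` of a linear classifier `W : ℝ^{k×d}` on input `x : ℝ^d`. -/
noncomputable def logits {k d : ℕ} (W : Fin k → Fin d → ℝ) (x : Fin d → ℝ) : Fin k → ℝ :=
  fun c => ∑ j, W c j * x j

/-- Cross-entropy loss `L(W) = -(1/n) ∑ᵢ log S_{yᵢ}(W xᵢ)`. -/
noncomputable def lossCE {n k d : ℕ} (x : Fin n → Fin d → ℝ) (y : Fin n → Fin k)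
    (W : Fin k → Fin d → ℝ) : ℝ :=
  -((1 : ℝ) / n) * ∑ i, Real.log (softmax (logits W (x i)) (y i))

/-- Proxy function `G(W) = (1/n) ∑ᵢ (1 - S_{yᵢ}(W xᵢ))`. -/
noncomputable def proxyG {n k d : ℕ} (x : Fin n → Fin d → ℝ) (y : Fin n → Fin k)
    (W : Fin k → Fin d → ℝ) : ℝ :=
  ((1 : ℝ) / n) * ∑ i, (1 - softmax (logits W (x i)) (y i))

/-- Per-sample gradient matrix `gᵢ(W) = (S(W xᵢ) - e_{yᵢ}) xᵢᵀ`. -/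
noncomputable def sampleGrad {k d : ℕ} (x : Fin d → ℝ) (y : Fin k)
    (W : Fin k → Fin d → ℝ) : Fin k → Fin d → ℝ :=
  fun c j => (softmax (logits W x) c - (if c = y then 1 else 0)) * x j

/-- Full gradient matrix `D(W) = (1/n) ∑ᵢ gᵢ(W)`. -/
noncomputable def gradCE {n k d : ℕ} (x : Fin n → Fin d → ℝ) (y : Fin n → Fin k)
    (W : Fin k → Fin d → ℝ) : Fin k → Fin d → ℝ :=
  fun c j => ((1 : ℝ) / n) * ∑ i, sampleGrad (x i) (y i) W c j

/-- Entry-wise 1-norm of a matrix. -/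
noncomputable def norm1M {k d : ℕ} (A : Fin k → Fin d → ℝ) : ℝ :=
  ∑ c, ∑ j, |A c j|

/-- 1-norm of a vector. -/
noncomputable def norm1V {d : ℕ} (v : Fin d → ℝ) : ℝ := ∑ j, |v j|

/-- `min_{c ≠ y} (e_y - e_c)ᵀ A x`. -/
noncomputable def marginMin {k d : ℕ} (hk : 2 ≤ k) (A : Fin k → Fin d → ℝ)
    (x : Fin d → ℝ) (y : Fin k) : ℝ :=
  (Finset.univ.erase y).inf'
    (by
      obtain ⟨cne, hcne⟩ := Fintype.exists_ne_of_one_lt_card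
        (by simpa using (by omega : 1 < k)) y
      exact ⟨cne, Finset.mem_erase.mpr ⟨hcne, Finset.mem_univ _⟩⟩)
    (fun c => logits A x y - logits A x c)

/-- `min_{i ∈ [n], c ≠ yᵢ} (e_{yᵢ} - e_c)ᵀ W xᵢ`. -/
noncomputable def dataMargin {n k d : ℕ} (hn : 1 ≤ n) (hk : 2 ≤ k)
    (x : Fin n → Fin d → ℝ) (y : Fin n → Fin k) (W : Fin k → Fin d → ℝ) : ℝ :=
  Finset.univ.inf' ⟨⟨0, by omega⟩, Finset.mem_univ _⟩
    (fun i => marginMin hk W (x i) (y i))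

/-- Max margin `γ` over the max-norm unit ball. -/
noncomputable def gammaMax {n k d : ℕ} (hn : 1 ≤ n) (hk : 2 ≤ k)
    (x : Fin n → Fin d → ℝ) (y : Fin n → Fin k) : ℝ :=
  sSup { g : ℝ | ∃ W' : Fin k → Fin d → ℝ, ‖W'‖ ≤ 1 ∧ g = dataMargin hn hk x y W' }

/-- Mini-batch gradient `(1/b) ∑_{i ∈ B} gᵢ(W)`. -/
noncomputable def batchGrad {n k d : ℕ} (x : Fin n → Fin d → ℝ) (y : Fin n → Fin k)
    (B : Finset (Fin n)) (b : ℕ) (W : Fin k → Fin d → ℝ) : Fin k → Fin d → ℝ :=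
  fun c j => ((1 : ℝ) / b) * ∑ i ∈ B, sampleGrad (x i) (y i) W c j

/-- Frobenius norm of a matrix. -/
noncomputable def frobNorm {k d : ℕ} (A : Fin k → Fin d → ℝ) : ℝ :=
  Real.sqrt (∑ c, ∑ j, (A c j) ^ 2)

section Helpers

lemma quad_deriv' (t : ℝ) :
    HasDerivAt (fun t : ℝ => Real.exp t - (1 + t + t ^ 2 / 2)) (Real.exp t - (1 + t)) t := by
  have h1 : HasDerivAt (fun t : ℝ => 1 + t + t ^ 2 / 2) (0 + 1 + (↑2 * t ^ (2-1) / 2)) t :=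
    ((hasDerivAt_const t (1:ℝ)).add (hasDerivAt_id t)).add ((hasDerivAt_pow 2 t).div_const 2)
  have := (Real.hasDerivAt_exp t).sub h1
  refine this.congr_deriv ?_
  push_cast; ring

/-- `e^u ≤ 1 + u + u²/2` for `u ≤ 0`. -/
lemma exp_le_quad_of_nonpos' {u : ℝ} (hu : u ≤ 0) :
    Real.exp u ≤ 1 + u + u ^ 2 / 2 := by
  have h : MonotoneOn (fun t : ℝ => Real.exp t - (1 + t + t ^ 2 / 2)) (Set.Iic 0) := by
    apply monotoneOn_of_deriv_nonneg (convex_Iic 0)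
    · exact (Real.continuous_exp.sub (by continuity)).continuousOn
    · intro t ht
      exact (quad_deriv' t).differentiableAt.differentiableWithinAt
    · intro t ht
      rw [(quad_deriv' t).deriv]
      have := Real.add_one_le_exp t
      linarith
  have := h (Set.mem_Iic.mpr hu) (Set.mem_Iic.mpr le_rfl) hu
  simp only [Real.exp_zero] at this
  nlinarith

lemma gfun_deriv' (t : ℝ) :
    HasDerivAt (fun t : ℝ => 1 + (t + t ^ 2 / 2 - 1) * Real.exp t)
      ((2 * t + t ^ 2 / 2) * Real.exp t) t := by
  have h1 : HasDerivAt (fun t : ℝ => t + t ^ 2 / 2 - 1) (1 + (↑2 * t ^ (2-1) / 2) - 0) t :=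
    ((hasDerivAt_id t).add ((hasDerivAt_pow 2 t).div_const 2)).sub (hasDerivAt_const t (1:ℝ))
  have := (hasDerivAt_const t (1:ℝ)).add (h1.mul (Real.hasDerivAt_exp t))
  refine this.congr_deriv ?_
  push_cast; ring

lemma ffun_deriv' (t : ℝ) :
    HasDerivAt (fun t : ℝ => 1 + t + t ^ 2 / 2 * Real.exp t - Real.exp t)
      (1 + (t + t ^ 2 / 2 - 1) * Real.exp t) t := by
  have h1 : HasDerivAt (fun t : ℝ => t ^ 2 / 2) (↑2 * t ^ (2-1) / 2) t :=
    (hasDerivAt_pow 2 t).div_const 2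
  have := (((hasDerivAt_const t (1:ℝ)).add (hasDerivAt_id t)).add
      (h1.mul (Real.hasDerivAt_exp t))).sub (Real.hasDerivAt_exp t)
  refine this.congr_deriv ?_
  push_cast; ring

/-- `e^u ≤ 1 + u + (u²/2) e^u` for `0 ≤ u`. -/
lemma exp_le_quad_of_nonneg' {u : ℝ} (hu : 0 ≤ u) :
    Real.exp u ≤ 1 + u + u ^ 2 / 2 * Real.exp u := by
  have hG : ∀ t : ℝ, 0 ≤ t → 0 ≤ 1 + (t + t ^ 2 / 2 - 1) * Real.exp t := by
    intro t ht
    have h : MonotoneOn (fun t : ℝ => 1 + (t + t ^ 2 / 2 - 1) * Real.exp t) (Set.Ici 0) := by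
      apply monotoneOn_of_deriv_nonneg (convex_Ici 0)
      · exact Continuous.continuousOn (by continuity)
      · intro s hs; exact (gfun_deriv' s).differentiableAt.differentiableWithinAt
      · intro s hs
        rw [(gfun_deriv' s).deriv]
        have hs0 : (0:ℝ) ≤ s := le_of_lt (by simpa using hs)
        positivity
    have := h (Set.mem_Ici.mpr le_rfl) (Set.mem_Ici.mpr ht) ht
    simpa using this
  have h : MonotoneOn (fun t : ℝ => 1 + t + t ^ 2 / 2 * Real.exp t - Real.exp t) (Set.Ici 0) := by
    apply monotoneOn_of_deriv_nonneg (convex_Ici 0)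
    · exact Continuous.continuousOn (by continuity)
    · intro s hs; exact (ffun_deriv' s).differentiableAt.differentiableWithinAt
    · intro s hs
      rw [(ffun_deriv' s).deriv]
      exact hG s (le_of_lt (by simpa using hs))
  have := h (Set.mem_Ici.mpr le_rfl) (Set.mem_Ici.mpr hu) hu
  simp only [Real.exp_zero] at this
  nlinarith

/-- key: `e^u - 1 - u ≤ (r²/2) e^r` when `|u| ≤ r`. -/
lemma exp_sub_one_sub_le' {u r : ℝ} (h : |u| ≤ r) :
    Real.exp u - 1 - u ≤ r ^ 2 / 2 * Real.exp r := by
  have hr : 0 ≤ r := le_trans (abs_nonneg u) h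
  rcases le_or_gt u 0 with hu | hu
  · have h1 := exp_le_quad_of_nonpos' hu
    have h2 : u ^ 2 ≤ r ^ 2 := by nlinarith [abs_le.mp h, abs_nonneg u]
    have h3 : (1:ℝ) ≤ Real.exp r := Real.one_le_exp hr
    nlinarith
  · have h1 := exp_le_quad_of_nonneg' hu.le
    have hur : u ≤ r := le_trans (le_abs_self u) h
    have h2 : u ^ 2 ≤ r ^ 2 := by nlinarith
    have h3 : Real.exp u ≤ Real.exp r := Real.exp_le_exp.mpr hur
    nlinarith [Real.exp_pos u, Real.exp_pos r]

lemma sum_exp_pos' {k : ℕ} (hk : 0 < k) (z : Fin k → ℝ) : 0 < ∑ j, Real.exp (z j) :=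
  Finset.sum_pos (fun _ _ => Real.exp_pos _) ⟨⟨0, hk⟩, Finset.mem_univ _⟩

lemma softmax_pos' {k : ℕ} (hk : 0 < k) (z : Fin k → ℝ) (c : Fin k) : 0 < softmax z c :=
  div_pos (Real.exp_pos _) (sum_exp_pos' hk z)

lemma softmax_sum_one' {k : ℕ} (hk : 0 < k) (z : Fin k → ℝ) : ∑ c, softmax z c = 1 := by
  unfold softmax
  rw [← Finset.sum_div, div_self (ne_of_gt (sum_exp_pos' hk z))]

lemma softmax_lt_one' {k : ℕ} (hk : 2 ≤ k) (z : Fin k → ℝ) (y : Fin k) : softmax z y < 1 := by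
  have h0 : 0 < k := by omega
  obtain ⟨c, hc⟩ := Fintype.exists_ne_of_one_lt_card (by simpa using (by omega : 1 < k)) y
  have := softmax_sum_one' h0 z
  have h1 : softmax z y + softmax z c ≤ ∑ c, softmax z c := by
    rw [← Finset.sum_pair (Ne.symm hc)]
    apply Finset.sum_le_sum_of_subset_of_nonneg (Finset.subset_univ _)
    intro i _ _; exact (softmax_pos' h0 z i).le
  have := softmax_pos' h0 z c
  linarith

lemma log_softmax' {k : ℕ} (hk : 0 < k) (z : Fin k → ℝ) (c : Fin k) :
    Real.log (softmax z c) = z c - Real.log (∑ j, Real.exp (z j)) := by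
  unfold softmax
  rw [Real.log_div (Real.exp_ne_zero _) (ne_of_gt (sum_exp_pos' hk z)), Real.log_exp]

/-- key per-sample descent inequality for softmax cross-entropy. -/
lemma core_descent' {k : ℕ} (hk : 2 ≤ k) (z v : Fin k → ℝ) (y : Fin k) (r : ℝ)
    (hv : ∀ c, |v c| ≤ r) :
    -Real.log (softmax (fun c => z c - v c) y)
      ≤ -Real.log (softmax z y)
        - (∑ c, (softmax z c - if c = y then 1 else 0) * v c)
        + 2 * r ^ 2 * Real.exp (2 * r) * (1 - softmax z y) := by
  have h0 : 0 < k := by omega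
  set S : Fin k → ℝ := softmax z with hS
  set u : Fin k → ℝ := fun c => v y - v c with hu
  have hr : 0 ≤ r := le_trans (abs_nonneg _) (hv y)
  have hSpos : ∀ c, 0 < S c := softmax_pos' h0 z
  have hSsum : ∑ c, S c = 1 := softmax_sum_one' h0 z
  have hD : 0 < ∑ j, Real.exp (z j) := sum_exp_pos' h0 z
  have hstep1 : -Real.log (softmax (fun c => z c - v c) y) + Real.log (S y)
      = Real.log (∑ j, S j * Real.exp (u j)) := by
    rw [log_softmax' h0, log_softmax' h0]
    have : ∑ j, S j * Real.exp (u j)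
        = (∑ j, Real.exp (z j - v j)) / (∑ j, Real.exp (z j)) * Real.exp (v y) := by
      rw [Finset.sum_div, Finset.sum_mul]
      apply Finset.sum_congr rfl
      intro j _
      simp only [hS, softmax, hu]
      rw [div_mul_eq_mul_div, ← Real.exp_add, div_mul_eq_mul_div, ← Real.exp_add]
      ring_nf
    rw [this, Real.log_mul (ne_of_gt (div_pos (sum_exp_pos' h0 _) hD)) (Real.exp_ne_zero _),
      Real.log_div (ne_of_gt (sum_exp_pos' h0 _)) (ne_of_gt hD), Real.log_exp]
    ring
  have hfo : -(∑ c, (S c - if c = y then 1 else 0) * v c) = ∑ c, S c * u c := by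
    have h1 : ∑ c, (S c - if c = y then 1 else 0) * v c
        = (∑ c, S c * v c) - v y := by
      rw [Finset.sum_congr rfl (fun c _ => by ring_nf :
        ∀ c ∈ Finset.univ, (S c - if c = y then 1 else 0) * v c
          = S c * v c - (if c = y then 1 else 0) * v c)]
      rw [Finset.sum_sub_distrib]
      congr 1
      rw [Finset.sum_eq_single y] <;> simp +contextual
    have h2 : ∑ c, S c * u c = (∑ c, S c * v y) - ∑ c, S c * v c := by
      rw [← Finset.sum_sub_distrib]; apply Finset.sum_congr rfl; intro c _; simp [hu]; ring
    rw [h1, h2, ← Finset.sum_mul, hSsum]; ring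
  have hT : 0 < ∑ j, S j * Real.exp (u j) :=
    Finset.sum_pos (fun j _ => mul_pos (hSpos j) (Real.exp_pos _)) ⟨y, Finset.mem_univ _⟩
  have hlog : Real.log (∑ j, S j * Real.exp (u j)) ≤ (∑ j, S j * Real.exp (u j)) - 1 :=
    Real.log_le_sub_one_of_pos hT
  have hexpand : (∑ j, S j * Real.exp (u j)) - 1 - ∑ j, S j * u j
      = ∑ j, S j * (Real.exp (u j) - 1 - u j) := by
    rw [Finset.sum_congr rfl (fun j _ => by ring :
      ∀ j ∈ Finset.univ, S j * (Real.exp (u j) - 1 - u j)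
        = S j * Real.exp (u j) - S j - S j * u j)]
    rw [Finset.sum_sub_distrib, Finset.sum_sub_distrib, hSsum]
  have hterm : ∑ j, S j * (Real.exp (u j) - 1 - u j)
      ≤ ∑ j, S j * (if j = y then 0 else 2 * r ^ 2 * Real.exp (2 * r)) := by
    apply Finset.sum_le_sum
    intro j _
    apply mul_le_mul_of_nonneg_left _ (hSpos j).le
    by_cases hj : j = y
    · simp [hj, hu]
    · simp only [hj, if_false]
      have huj : |u j| ≤ 2 * r := by
        have := hv y; have := hv j
        simp only [hu]
        calc |v y - v j| ≤ |v y| + |v j| := abs_sub _ _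
          _ ≤ 2 * r := by linarith
      have := exp_sub_one_sub_le' huj
      calc Real.exp (u j) - 1 - u j ≤ (2*r) ^ 2 / 2 * Real.exp (2*r) := this
        _ = 2 * r ^ 2 * Real.exp (2*r) := by ring
  have hsum_ite : ∑ j, S j * (if j = y then 0 else 2 * r ^ 2 * Real.exp (2 * r))
      = 2 * r ^ 2 * Real.exp (2 * r) * (1 - S y) := by
    rw [Finset.sum_congr rfl (fun j _ => by split <;> ring_nf :
      ∀ j ∈ Finset.univ, S j * (if j = y then 0 else 2 * r ^ 2 * Real.exp (2 * r))
        = S j * (2 * r ^ 2 * Real.exp (2 * r))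
          - (if j = y then S j * (2 * r ^ 2 * Real.exp (2 * r)) else 0))]
    rw [Finset.sum_sub_distrib, ← Finset.sum_mul, hSsum, Finset.sum_ite_eq' Finset.univ y]
    simp; ring
  linarith [hstep1, hfo, hlog, hexpand, hterm, hsum_ite]

/-- swap a triple sum. -/
lemma sum_swap3' {α β γ : Type*} [Fintype α] [Fintype β] [Fintype γ]
    (f : α → β → γ → ℝ) :
    ∑ a, ∑ b, ∑ c, f a b c = ∑ c, ∑ a, ∑ b, f a b c := by
  have h1 : ∑ a, ∑ b, ∑ c, f a b c = ∑ a, ∑ c, ∑ b, f a b c :=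
    Finset.sum_congr rfl (fun a _ => Finset.sum_comm)
  rw [h1, Finset.sum_comm]

/-- inner product with a per-sample gradient. -/
lemma inner_sampleGrad' {k d : ℕ} (xx : Fin d → ℝ) (yc : Fin k)
    (W A : Fin k → Fin d → ℝ) :
    ∑ c, ∑ j, sampleGrad xx yc W c j * A c j
      = ∑ c, (softmax (logits W xx) c - if c = yc then 1 else 0) * (∑ j, A c j * xx j) := by
  apply Finset.sum_congr rfl
  intro c _
  rw [Finset.mul_sum]
  apply Finset.sum_congr rfl
  intro j _
  simp only [sampleGrad]
  ring

/-- inner product with the full gradient. -/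
lemma gradCE_inner' {n k d : ℕ} (x : Fin n → Fin d → ℝ) (y : Fin n → Fin k)
    (W A : Fin k → Fin d → ℝ) :
    ∑ c, ∑ j, gradCE x y W c j * A c j
      = (1/(n:ℝ)) * ∑ i, ∑ c, ∑ j, sampleGrad (x i) (y i) W c j * A c j := by
  calc ∑ c, ∑ j, gradCE x y W c j * A c j
      = ∑ c, ∑ j, ∑ i, (1/(n:ℝ)) * (sampleGrad (x i) (y i) W c j * A c j) := by
        apply Finset.sum_congr rfl; intro c _
        apply Finset.sum_congr rfl; intro j _
        simp only [gradCE, Finset.sum_mul, Finset.mul_sum]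
        apply Finset.sum_congr rfl; intro i _
        ring
    _ = ∑ i, ∑ c, ∑ j, (1/(n:ℝ)) * (sampleGrad (x i) (y i) W c j * A c j) := sum_swap3' _
    _ = (1/(n:ℝ)) * ∑ i, ∑ c, ∑ j, sampleGrad (x i) (y i) W c j * A c j := by
        rw [Finset.mul_sum]
        apply Finset.sum_congr rfl; intro i _
        rw [Finset.mul_sum]
        apply Finset.sum_congr rfl; intro c _
        rw [Finset.mul_sum]

lemma softmax_le_one {k : ℕ} (hk : 0 < k) (z : Fin k → ℝ) (c : Fin k) : softmax z c ≤ 1 := by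
  have h1 := softmax_sum_one' hk z
  have h2 : softmax z c ≤ ∑ c', softmax z c' :=
    Finset.single_le_sum (fun c' _ => (softmax_pos' hk z c').le) (Finset.mem_univ c)
  linarith


/-- `∑_c |S_c - e_y| = 2 (1 - S_y)`. -/
lemma abs_softmax_sub_ite_sum' {k : ℕ} (hk : 0 < k) (z : Fin k → ℝ) (yc : Fin k) :
    ∑ c, |softmax z c - if c = yc then (1:ℝ) else 0| = 2 * (1 - softmax z yc) := by
  rw [← Finset.sum_erase_add _ _ (Finset.mem_univ yc)]
  have h1 : ∑ c ∈ Finset.univ.erase yc, |softmax z c - if c = yc then (1:ℝ) else 0|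
      = ∑ c ∈ Finset.univ.erase yc, softmax z c := by
    apply Finset.sum_congr rfl; intro c hc
    rw [if_neg (Finset.ne_of_mem_erase hc), sub_zero, abs_of_nonneg (softmax_pos' hk z c).le]
  have h2 : ∑ c ∈ Finset.univ.erase yc, softmax z c = 1 - softmax z yc := by
    have h3 := Finset.sum_erase_add Finset.univ (fun c => softmax z c) (Finset.mem_univ yc)
    have h4 := softmax_sum_one' hk z
    linarith
  rw [h1, h2, if_pos rfl, abs_of_nonpos (by linarith [softmax_le_one hk z yc] : softmax z yc - 1 ≤ 0)]
  ring

/-- margin times proxy bound. -/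
lemma margin_bound' {k d : ℕ} (hk : 2 ≤ k) (W W' : Fin k → Fin d → ℝ)
    (xx : Fin d → ℝ) (yc : Fin k) :
    marginMin hk W' xx yc * (1 - softmax (logits W xx) yc)
      ≤ -∑ c, (softmax (logits W xx) c - if c = yc then 1 else 0) * logits W' xx c := by
  have h0 : 0 < k := by omega
  have hτ : 1 - softmax (logits W xx) yc
      = ∑ c ∈ Finset.univ.erase yc, softmax (logits W xx) c := by
    have h3 := Finset.sum_erase_add Finset.univ (fun c => softmax (logits W xx) c)
      (Finset.mem_univ yc)
    have h4 := softmax_sum_one' h0 (logits W xx)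
    linarith
  rw [hτ, Finset.mul_sum]
  have h1 : ∑ c ∈ Finset.univ.erase yc, marginMin hk W' xx yc * softmax (logits W xx) c
      ≤ ∑ c ∈ Finset.univ.erase yc,
          (logits W' xx yc - logits W' xx c) * softmax (logits W xx) c := by
    apply Finset.sum_le_sum
    intro c hc
    exact mul_le_mul_of_nonneg_right (Finset.inf'_le _ hc) (softmax_pos' h0 _ c).le
  refine le_trans h1 (le_of_eq ?_)
  have h2 : ∑ c ∈ Finset.univ.erase yc,
      (logits W' xx yc - logits W' xx c) * softmax (logits W xx) c
      = ∑ c, (logits W' xx yc - logits W' xx c) * softmax (logits W xx) c := by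
    rw [← Finset.sum_erase_add _ _ (Finset.mem_univ yc)]
    simp
  rw [h2]
  have h4 := softmax_sum_one' h0 (logits W xx)
  have h5 : ∑ c, (if c = yc then (1:ℝ) else 0) * logits W' xx c = logits W' xx yc := by
    rw [Finset.sum_eq_single yc] <;> simp +contextual
  have h6 : ∑ c, (logits W' xx yc - logits W' xx c) * softmax (logits W xx) c
      = logits W' xx yc * (∑ c, softmax (logits W xx) c)
        - ∑ c, softmax (logits W xx) c * logits W' xx c := by
    rw [Finset.mul_sum, ← Finset.sum_sub_distrib]
    apply Finset.sum_congr rfl; intro c _; ring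
  have h7 : ∑ c, (softmax (logits W xx) c - if c = yc then 1 else 0) * logits W' xx c
      = (∑ c, softmax (logits W xx) c * logits W' xx c) - logits W' xx yc := by
    rw [← h5, ← Finset.sum_sub_distrib]
    apply Finset.sum_congr rfl; intro c _; ring
  rw [h6, h7, h4]
  ring

end Helpers
lemma stepA_lemma (n k d : ℕ) (hn : 1 ≤ n) (hk : 2 ≤ k)
    (x : Fin n → Fin d → ℝ) (y : Fin n → Fin k)
    (R : ℝ) (hR : 0 < R) (hx : ∀ i, norm1V (x i) ≤ R)
    (η₀ η : ℝ) (hη : 0 < η) (hηle : η ≤ η₀)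
    (W Δ : Fin k → Fin d → ℝ) (hΔabs : ∀ c j, |Δ c j| ≤ 1) :
    lossCE x y (W - η • Δ)
      ≤ lossCE x y W - η * (∑ c, ∑ j, gradCE x y W c j * Δ c j)
        + 2 * η^2 * R^2 * Real.exp (2*R*η₀) * proxyG x y W := by
  have hk0 : 0 < k := by omega
  have hn' : (0:ℝ) < n := by exact_mod_cast hn
  have hτpos : ∀ i, 0 < 1 - softmax (logits W (x i)) (y i) := fun i => by
    have := softmax_lt_one' hk (logits W (x i)) (y i); linarith
  have hGeq : proxyG x y W = (1/(n:ℝ)) * ∑ i, (1 - softmax (logits W (x i)) (y i)) := rfl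
  have hGpos : 0 < proxyG x y W := by
    rw [hGeq]
    exact mul_pos (by positivity)
      (Finset.sum_pos (fun i _ => hτpos i) ⟨⟨0, by omega⟩, Finset.mem_univ _⟩)
  have hcore : ∀ i, -Real.log (softmax (logits (W - η • Δ) (x i)) (y i))
      ≤ -Real.log (softmax (logits W (x i)) (y i))
        - (∑ c, (softmax (logits W (x i)) c - if c = y i then 1 else 0)
            * (η * ∑ j, Δ c j * x i j))
        + 2 * (η*R)^2 * Real.exp (2*(η*R)) * (1 - softmax (logits W (x i)) (y i)) := by
    intro i
    have hlogeq : logits (W - η • Δ) (x i)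
        = fun c => logits W (x i) c - η * ∑ j, Δ c j * x i j := by
      funext c
      simp only [logits, Pi.sub_apply, Pi.smul_apply, smul_eq_mul]
      rw [Finset.mul_sum, ← Finset.sum_sub_distrib]
      exact Finset.sum_congr rfl fun j _ => by ring
    rw [hlogeq]
    apply core_descent' hk (logits W (x i)) _ (y i) (η*R)
    intro c
    rw [abs_mul, abs_of_pos hη]
    apply mul_le_mul_of_nonneg_left _ hη.le
    calc |∑ j, Δ c j * x i j| ≤ ∑ j, |Δ c j * x i j| := Finset.abs_sum_le_sum_abs _ _
      _ ≤ ∑ j, |x i j| := by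
          apply Finset.sum_le_sum; intro j _
          rw [abs_mul]
          exact mul_le_of_le_one_left (abs_nonneg _) (hΔabs c j)
      _ ≤ R := hx i
  have hsum := Finset.sum_le_sum (fun i (_ : i ∈ Finset.univ) => hcore i)
  have hL1 : lossCE x y (W - η • Δ)
      = (1/(n:ℝ)) * ∑ i, -Real.log (softmax (logits (W - η • Δ) (x i)) (y i)) := by
    simp only [lossCE, Finset.sum_neg_distrib]; ring
  have hL2 : lossCE x y W
      = (1/(n:ℝ)) * ∑ i, -Real.log (softmax (logits W (x i)) (y i)) := by
    simp only [lossCE, Finset.sum_neg_distrib]; ring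
  have hFO : (1/(n:ℝ)) * ∑ i, (∑ c, (softmax (logits W (x i)) c
        - if c = y i then 1 else 0) * (η * ∑ j, Δ c j * x i j))
      = η * ∑ c, ∑ j, gradCE x y W c j * Δ c j := by
    rw [gradCE_inner']
    rw [mul_left_comm]
    congr 1
    rw [Finset.mul_sum]
    apply Finset.sum_congr rfl; intro i _
    rw [inner_sampleGrad', Finset.mul_sum]
    apply Finset.sum_congr rfl; intro c _
    ring
  have hexpmono : Real.exp (2*(η*R)) ≤ Real.exp (2*R*η₀) :=
    Real.exp_le_exp.mpr (by nlinarith)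
  calc lossCE x y (W - η • Δ)
      = (1/(n:ℝ)) * ∑ i, -Real.log (softmax (logits (W - η • Δ) (x i)) (y i)) := hL1
    _ ≤ (1/(n:ℝ)) * ∑ i, (-Real.log (softmax (logits W (x i)) (y i))
          - (∑ c, (softmax (logits W (x i)) c - if c = y i then 1 else 0)
              * (η * ∑ j, Δ c j * x i j))
          + 2 * (η*R)^2 * Real.exp (2*(η*R)) * (1 - softmax (logits W (x i)) (y i))) := by
        apply mul_le_mul_of_nonneg_left hsum (by positivity)
    _ = lossCE x y W - η * (∑ c, ∑ j, gradCE x y W c j * Δ c j)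
          + 2 * (η*R)^2 * Real.exp (2*(η*R)) * proxyG x y W := by
        rw [Finset.sum_add_distrib, Finset.sum_sub_distrib, ← Finset.mul_sum, hGeq, hL2, ← hFO]
        ring
    _ ≤ lossCE x y W - η * (∑ c, ∑ j, gradCE x y W c j * Δ c j)
          + 2 * η^2 * R^2 * Real.exp (2*R*η₀) * proxyG x y W := by
        have h1 : 2 * (η*R)^2 * Real.exp (2*(η*R)) * proxyG x y W
            ≤ 2 * η^2 * R^2 * Real.exp (2*R*η₀) * proxyG x y W := by
          have h2 : 2 * (η*R)^2 * Real.exp (2*(η*R)) ≤ 2 * η^2 * R^2 * Real.exp (2*R*η₀) := by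
            nlinarith [Real.exp_pos (2*(η*R)), sq_nonneg (η*R)]
          exact mul_le_mul_of_nonneg_right h2 hGpos.le
        linarith

lemma hgnorm_lemma (n k d : ℕ) (hk : 2 ≤ k)
    (x : Fin n → Fin d → ℝ) (y : Fin n → Fin k)
    (R : ℝ) (hR : 0 < R) (hx : ∀ i, norm1V (x i) ≤ R)
    (W : Fin k → Fin d → ℝ) :
    ∀ i, ∑ c, ∑ j, |sampleGrad (x i) (y i) W c j|
      ≤ 2 * R * (1 - softmax (logits W (x i)) (y i)) := by
  have hk0 : 0 < k := by omega
  have hτpos : ∀ i, 0 < 1 - softmax (logits W (x i)) (y i) := fun i => by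
    have := softmax_lt_one' hk (logits W (x i)) (y i); linarith
  intro i
  have h1 : ∑ c, ∑ j, |sampleGrad (x i) (y i) W c j|
      = (∑ c, |softmax (logits W (x i)) c - if c = y i then (1:ℝ) else 0|)
        * (∑ j, |x i j|) := by
    rw [Finset.sum_mul_sum]
    apply Finset.sum_congr rfl; intro c _
    apply Finset.sum_congr rfl; intro j _
    simp only [sampleGrad]
    rw [abs_mul]
  rw [h1, abs_softmax_sub_ite_sum' hk0]
  have h2 : (0:ℝ) ≤ ∑ j, |x i j| := Finset.sum_nonneg fun j _ => abs_nonneg _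
  have h3 : ∑ j, |x i j| ≤ R := hx i
  have h4 := (hτpos i).le
  nlinarith

lemma stepB2_lemma (n k d : ℕ) (hn : 1 ≤ n) (hk : 2 ≤ k)
    (x : Fin n → Fin d → ℝ) (y : Fin n → Fin k)
    (R : ℝ) (hR : 0 < R) (hx : ∀ i, norm1V (x i) ≤ R)
    (m b : ℕ) (hm : 1 ≤ m) (hb : 1 ≤ b) (hnb : n = m * b)
    (W : Fin k → Fin d → ℝ) (B : Finset (Fin n)) (hB : B.card = b) :
    ∑ c, ∑ j, |gradCE x y W c j - batchGrad x y B b W c j|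
      ≤ 2 * R * ((m:ℝ)-1) * proxyG x y W := by
  have hk0 : 0 < k := by omega
  have hn' : (0:ℝ) < n := by exact_mod_cast hn
  have hτpos : ∀ i, 0 < 1 - softmax (logits W (x i)) (y i) := fun i => by
    have := softmax_lt_one' hk (logits W (x i)) (y i); linarith
  have hGeq : proxyG x y W = (1/(n:ℝ)) * ∑ i, (1 - softmax (logits W (x i)) (y i)) := rfl
  have hGpos : 0 < proxyG x y W := by
    rw [hGeq]
    exact mul_pos (by positivity)
      (Finset.sum_pos (fun i _ => hτpos i) ⟨⟨0, by omega⟩, Finset.mem_univ _⟩)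
  have hb' : (0:ℝ) < b := by exact_mod_cast hb
  have hm' : (1:ℝ) ≤ m := by exact_mod_cast hm
  have hcast : (n:ℝ) = m * b := by exact_mod_cast hnb
  have hgnorm := hgnorm_lemma n k d hk x y R hR hx W
  have hdiff_entry : ∀ c j, gradCE x y W c j - batchGrad x y B b W c j
      = ∑ i, (if i ∈ B then ((1:ℝ)/n - 1/b) else 1/n) * sampleGrad (x i) (y i) W c j := by
    intro c j
    simp only [gradCE, batchGrad]
    have h1 : (1/(b:ℝ)) * ∑ i ∈ B, sampleGrad (x i) (y i) W c j
        = ∑ i, if i ∈ B then (1/(b:ℝ)) * sampleGrad (x i) (y i) W c j else 0 := by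
      rw [Finset.sum_ite_mem, Finset.univ_inter, Finset.mul_sum]
    rw [h1, Finset.mul_sum, ← Finset.sum_sub_distrib]
    apply Finset.sum_congr rfl; intro i _
    by_cases hiB : i ∈ B <;> simp only [hiB, if_true, if_false] <;> ring
  have hcoefabs : ∀ i : Fin n, |if i ∈ B then ((1:ℝ)/n - 1/b) else 1/n|
      = if i ∈ B then ((m:ℝ)-1)/n else 1/n := by
    intro i
    by_cases hiB : i ∈ B <;> simp only [hiB, if_true, if_false]
    · have hbn : (b:ℝ) ≤ n := by rw [hcast]; nlinarith
      rw [abs_of_nonpos (sub_nonpos.mpr (one_div_le_one_div_of_le hb' hbn))]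
      rw [div_sub_div _ _ (ne_of_gt hn') (ne_of_gt hb'), neg_div', neg_sub]
      rw [div_eq_div_iff (by positivity) (ne_of_gt hn')]
      rw [hcast]; ring
    · exact abs_of_pos (by positivity)
  have h1 : ∑ c, ∑ j, |gradCE x y W c j - batchGrad x y B b W c j|
      ≤ ∑ i, (if i ∈ B then ((m:ℝ)-1)/n else 1/n)
          * (∑ c, ∑ j, |sampleGrad (x i) (y i) W c j|) := by
    calc ∑ c, ∑ j, |gradCE x y W c j - batchGrad x y B b W c j|
        ≤ ∑ c, ∑ j, ∑ i, |(if i ∈ B then ((1:ℝ)/n - 1/b) else 1/n)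
            * sampleGrad (x i) (y i) W c j| := by
          apply Finset.sum_le_sum; intro c _
          apply Finset.sum_le_sum; intro j _
          rw [hdiff_entry c j]
          exact Finset.abs_sum_le_sum_abs _ _
      _ = ∑ i, ∑ c, ∑ j, |(if i ∈ B then ((1:ℝ)/n - 1/b) else 1/n)
            * sampleGrad (x i) (y i) W c j| := sum_swap3' _
      _ = ∑ i, (if i ∈ B then ((m:ℝ)-1)/n else 1/n)
            * (∑ c, ∑ j, |sampleGrad (x i) (y i) W c j|) := by
          apply Finset.sum_congr rfl; intro i _
          rw [Finset.mul_sum]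
          apply Finset.sum_congr rfl; intro c _
          rw [Finset.mul_sum]
          apply Finset.sum_congr rfl; intro j _
          rw [abs_mul, hcoefabs i]
  rcases eq_or_lt_of_le hm with hm1 | hm2
  · -- m = 1 : B = univ, coefficient is 0
    have hm1' : m = 1 := hm1.symm
    have hbn : b = n := by rw [hnb, hm1', one_mul]
    have hBuniv : B = Finset.univ := by
      rw [← Finset.card_eq_iff_eq_univ]
      simp [hB, hbn]
    have hzero : ∀ i : Fin n, (if i ∈ B then ((m:ℝ)-1)/n else 1/n)
        * (∑ c, ∑ j, |sampleGrad (x i) (y i) W c j|) = 0 := by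
      intro i
      have : ((m:ℝ)-1) = 0 := by
        have : (m:ℝ) = 1 := by exact_mod_cast hm1.symm
        linarith
      simp [hBuniv, this]
    refine le_trans h1 ?_
    rw [Finset.sum_congr rfl (fun i _ => hzero i), Finset.sum_const, smul_zero]
    have : (0:ℝ) ≤ 2 * R * ((m:ℝ)-1) * proxyG x y W := by
      have : (0:ℝ) ≤ (m:ℝ) - 1 := by linarith
      positivity
    linarith
  · -- 2 ≤ m
    have hm2' : (2:ℝ) ≤ m := by exact_mod_cast hm2
    have h2 : ∑ i, (if i ∈ B then ((m:ℝ)-1)/n else 1/n)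
          * (∑ c, ∑ j, |sampleGrad (x i) (y i) W c j|)
        ≤ ∑ i, (((m:ℝ)-1)/n) * (2 * R * (1 - softmax (logits W (x i)) (y i))) := by
      apply Finset.sum_le_sum; intro i _
      have hnn : (0:ℝ) ≤ ∑ c, ∑ j, |sampleGrad (x i) (y i) W c j| :=
        Finset.sum_nonneg fun c _ => Finset.sum_nonneg fun j _ => abs_nonneg _
      have hcle : (if i ∈ B then ((m:ℝ)-1)/n else 1/n) ≤ ((m:ℝ)-1)/n := by
        by_cases hiB : i ∈ B <;> simp only [hiB, if_true, if_false]
        · exact le_refl _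
        · gcongr
          linarith
      calc (if i ∈ B then ((m:ℝ)-1)/n else 1/n)
            * (∑ c, ∑ j, |sampleGrad (x i) (y i) W c j|)
          ≤ (((m:ℝ)-1)/n) * (∑ c, ∑ j, |sampleGrad (x i) (y i) W c j|) :=
            mul_le_mul_of_nonneg_right hcle hnn
        _ ≤ (((m:ℝ)-1)/n) * (2 * R * (1 - softmax (logits W (x i)) (y i))) := by
            apply mul_le_mul_of_nonneg_left (hgnorm i)
            have : (0:ℝ) ≤ (m:ℝ) - 1 := by linarith
            positivity
    refine le_trans h1 (le_trans h2 ?_)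
    rw [hGeq, ← Finset.mul_sum, Finset.mul_sum]
    apply le_of_eq
    rw [← Finset.mul_sum, ← Finset.mul_sum]
    ring

lemma stepB3_lemma (n k d : ℕ) (hn : 1 ≤ n) (hk : 2 ≤ k)
    (x : Fin n → Fin d → ℝ) (y : Fin n → Fin k)
    (W : Fin k → Fin d → ℝ) :
    gammaMax hn hk x y * proxyG x y W ≤ ∑ c, ∑ j, |gradCE x y W c j| := by
  have hk0 : 0 < k := by omega
  have hn' : (0:ℝ) < n := by exact_mod_cast hn
  have hτpos : ∀ i, 0 < 1 - softmax (logits W (x i)) (y i) := fun i => by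
    have := softmax_lt_one' hk (logits W (x i)) (y i); linarith
  have hGeq : proxyG x y W = (1/(n:ℝ)) * ∑ i, (1 - softmax (logits W (x i)) (y i)) := rfl
  have hGpos : 0 < proxyG x y W := by
    rw [hGeq]
    exact mul_pos (by positivity)
      (Finset.sum_pos (fun i _ => hτpos i) ⟨⟨0, by omega⟩, Finset.mem_univ _⟩)
  have hne : {g : ℝ | ∃ W' : Fin k → Fin d → ℝ, ‖W'‖ ≤ 1
      ∧ g = dataMargin hn hk x y W'}.Nonempty :=
    ⟨dataMargin hn hk x y 0, 0, by simp, rfl⟩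
  have hkey : gammaMax hn hk x y ≤ (∑ c, ∑ j, |gradCE x y W c j|) / proxyG x y W := by
    unfold gammaMax
    apply csSup_le hne
    rintro g ⟨W', hW', rfl⟩
    rw [le_div_iff₀ hGpos]
    have hW'abs : ∀ c j, |W' c j| ≤ 1 := by
      intro c j
      calc |W' c j| = ‖W' c j‖ := (Real.norm_eq_abs _).symm
        _ ≤ ‖W' c‖ := norm_le_pi_norm (W' c) j
        _ ≤ ‖W'‖ := norm_le_pi_norm W' c
        _ ≤ 1 := hW'
    have h1 : ∀ i, dataMargin hn hk x y W' * (1 - softmax (logits W (x i)) (y i))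
        ≤ -∑ c, ∑ j, sampleGrad (x i) (y i) W c j * W' c j := by
      intro i
      refine le_trans (mul_le_mul_of_nonneg_right
        (Finset.inf'_le _ (Finset.mem_univ i)) (hτpos i).le) ?_
      have hmb := margin_bound' hk W W' (x i) (y i)
      rw [inner_sampleGrad']
      exact le_trans hmb (le_of_eq (by simp only [logits]))
    have h2 : dataMargin hn hk x y W' * proxyG x y W
        ≤ -∑ c, ∑ j, gradCE x y W c j * W' c j := by
      rw [gradCE_inner', hGeq]
      have h3 := Finset.sum_le_sum (fun i (_ : i ∈ Finset.univ) => h1 i)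
      have e1 : dataMargin hn hk x y W'
            * (1/(n:ℝ) * ∑ i, (1 - softmax (logits W (x i)) (y i)))
          = (1/(n:ℝ)) * ∑ i, dataMargin hn hk x y W'
              * (1 - softmax (logits W (x i)) (y i)) := by
        rw [← Finset.mul_sum]; ring
      have e2 : -((1/(n:ℝ)) * ∑ i, ∑ c, ∑ j, sampleGrad (x i) (y i) W c j * W' c j)
          = (1/(n:ℝ)) * ∑ i, -∑ c, ∑ j, sampleGrad (x i) (y i) W c j * W' c j := by
        rw [Finset.sum_neg_distrib]; ring
      rw [e1, e2]
      exact mul_le_mul_of_nonneg_left h3 (by positivity)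
    refine le_trans h2 ?_
    have h4 : ∀ c j, -(gradCE x y W c j * W' c j) ≤ |gradCE x y W c j| := by
      intro c j
      calc -(gradCE x y W c j * W' c j) ≤ |gradCE x y W c j * W' c j| := neg_le_abs _
        _ = |gradCE x y W c j| * |W' c j| := abs_mul _ _
        _ ≤ |gradCE x y W c j| := mul_le_of_le_one_right (abs_nonneg _) (hW'abs c j)
    calc -∑ c, ∑ j, gradCE x y W c j * W' c j
        = ∑ c, ∑ j, -(gradCE x y W c j * W' c j) := by
          simp [Finset.sum_neg_distrib]
      _ ≤ ∑ c, ∑ j, |gradCE x y W c j| :=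
          Finset.sum_le_sum fun c _ => Finset.sum_le_sum fun j _ => h4 c j
  calc gammaMax hn hk x y * proxyG x y W
      ≤ ((∑ c, ∑ j, |gradCE x y W c j|) / proxyG x y W) * proxyG x y W :=
        mul_le_mul_of_nonneg_right hkey hGpos.le
    _ = ∑ c, ∑ j, |gradCE x y W c j| := div_mul_cancel₀ _ (ne_of_gt hGpos)

/-- descent inequality for stochastic `ℓ_∞` steepest descent without momentum:
`L(W − ηΔ) ≤ L(W) − η (γ − 4(m−1)R − 2η R² e^{2Rη₀}) G(W)`. -/
theorem stochastic_steepest_descent_lemma (n k d : ℕ)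
    (hn : 1 ≤ n) (hk : 2 ≤ k) (hd : 1 ≤ d)
    (x : Fin n → Fin d → ℝ) (y : Fin n → Fin k)
    (R : ℝ) (hR : 0 < R) (hx : ∀ i, norm1V (x i) ≤ R)
    (m b : ℕ) (hm : 1 ≤ m) (hb : 1 ≤ b) (hnb : n = m * b)
    (η₀ η : ℝ) (hη₀ : 0 < η₀) (hη : 0 < η) (hηle : η ≤ η₀)
    (W : Fin k → Fin d → ℝ)
    (B : Finset (Fin n)) (hB : B.card = b)
    (Δ : Fin k → Fin d → ℝ) (hΔnorm : ‖Δ‖ ≤ 1)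
    (hΔopt : ∑ cc, ∑ j, batchGrad x y B b W cc j * Δ cc j
      = norm1M (batchGrad x y B b W)) :
    lossCE x y (W - η • Δ)
      ≤ lossCE x y W
        - η * (gammaMax hn hk x y - 4 * ((m : ℝ) - 1) * R
            - 2 * η * R ^ 2 * Real.exp (2 * R * η₀)) * proxyG x y W := by
  have hk0 : 0 < k := by omega
  have hn' : (0:ℝ) < n := by exact_mod_cast hn
  have hτpos : ∀ i, 0 < 1 - softmax (logits W (x i)) (y i) := fun i => by
    have := softmax_lt_one' hk (logits W (x i)) (y i); linarith
  have hGeq : proxyG x y W = (1/(n:ℝ)) * ∑ i, (1 - softmax (logits W (x i)) (y i)) := rfl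
  have hGpos : 0 < proxyG x y W := by
    rw [hGeq]
    exact mul_pos (by positivity)
      (Finset.sum_pos (fun i _ => hτpos i) ⟨⟨0, by omega⟩, Finset.mem_univ _⟩)
  have hΔabs : ∀ c j, |Δ c j| ≤ 1 := by
    intro c j
    calc |Δ c j| = ‖Δ c j‖ := (Real.norm_eq_abs _).symm
      _ ≤ ‖Δ c‖ := norm_le_pi_norm (Δ c) j
      _ ≤ ‖Δ‖ := norm_le_pi_norm Δ c
      _ ≤ 1 := hΔnorm
  have hstepA := stepA_lemma n k d hn hk x y R hR hx η₀ η hη hηle W Δ hΔabs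
  have hB2 := stepB2_lemma n k d hn hk x y R hR hx m b hm hb hnb W B hB
  have hB3 := stepB3_lemma n k d hn hk x y W
  -- ### Step B1 : combine
  have hB1 : (gammaMax hn hk x y - 4*((m:ℝ)-1)*R) * proxyG x y W
      ≤ ∑ c, ∑ j, gradCE x y W c j * Δ c j := by
    have hsplit : ∑ c, ∑ j, gradCE x y W c j * Δ c j
        = (∑ c, ∑ j, batchGrad x y B b W c j * Δ c j)
          + ∑ c, ∑ j, (gradCE x y W c j - batchGrad x y B b W c j) * Δ c j := by
      rw [← Finset.sum_add_distrib]
      apply Finset.sum_congr rfl; intro c _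
      rw [← Finset.sum_add_distrib]
      apply Finset.sum_congr rfl; intro j _
      ring
    have hlow : -(∑ c, ∑ j, |gradCE x y W c j - batchGrad x y B b W c j|)
        ≤ ∑ c, ∑ j, (gradCE x y W c j - batchGrad x y B b W c j) * Δ c j := by
      have e : -(∑ c, ∑ j, |gradCE x y W c j - batchGrad x y B b W c j|)
          = ∑ c, ∑ j, -|gradCE x y W c j - batchGrad x y B b W c j| := by
        simp [Finset.sum_neg_distrib]
      rw [e]
      apply Finset.sum_le_sum; intro c _
      apply Finset.sum_le_sum; intro j _
      have hb1 : |(gradCE x y W c j - batchGrad x y B b W c j) * Δ c j|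
          ≤ |gradCE x y W c j - batchGrad x y B b W c j| := by
        rw [abs_mul]
        exact mul_le_of_le_one_right (abs_nonneg _) (hΔabs c j)
      calc -|gradCE x y W c j - batchGrad x y B b W c j|
          ≤ -|(gradCE x y W c j - batchGrad x y B b W c j) * Δ c j| := neg_le_neg hb1
        _ ≤ (gradCE x y W c j - batchGrad x y B b W c j) * Δ c j := neg_abs_le _
    have htri : ∑ c, ∑ j, |gradCE x y W c j|
        ≤ (∑ c, ∑ j, |batchGrad x y B b W c j|)
          + ∑ c, ∑ j, |gradCE x y W c j - batchGrad x y B b W c j| := by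
      rw [← Finset.sum_add_distrib]
      apply Finset.sum_le_sum; intro c _
      rw [← Finset.sum_add_distrib]
      apply Finset.sum_le_sum; intro j _
      calc |gradCE x y W c j| = |batchGrad x y B b W c j
            + (gradCE x y W c j - batchGrad x y B b W c j)| := by ring_nf
        _ ≤ |batchGrad x y B b W c j| + |gradCE x y W c j - batchGrad x y B b W c j| :=
            abs_add_le _ _
    have hopt : ∑ c, ∑ j, batchGrad x y B b W c j * Δ c j
        = ∑ c, ∑ j, |batchGrad x y B b W c j| := by
      rw [hΔopt]; rfl
    linarith [hB2, hB3]
  -- ### final assembly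
  have hfin := mul_le_mul_of_nonneg_left hB1 hη.le
  calc lossCE x y (W - η • Δ)
      ≤ lossCE x y W - η * (∑ c, ∑ j, gradCE x y W c j * Δ c j)
        + 2 * η^2 * R^2 * Real.exp (2*R*η₀) * proxyG x y W := hstepA
    _ ≤ lossCE x y W - η * ((gammaMax hn hk x y - 4*((m:ℝ)-1)*R) * proxyG x y W)
        + 2 * η^2 * R^2 * Real.exp (2*R*η₀) * proxyG x y W := by linarith
    _ = lossCE x y W - η * (gammaMax hn hk x y - 4 * ((m:ℝ) - 1) * R
          - 2 * η * R ^ 2 * Real.exp (2 * R * η₀)) * proxyG x y W := by ring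
end

section
/- Let K ≥ 2, let y ∈ {1,…,K}, let α > 0, and set x = α·e_y ∈ ℝ^K. Then for every W ∈ ℝ^{K×K}, the entry-wise sign of the per-sample cross-entropy gradient at W is independent of W and of α: sgn((S(Wx) − e_y) xᵀ) = (𝟙 − 2e_y) e_yᵀ, equivalently −sgn((S(Wx) − e_y) xᵀ) = (2e_y − 𝟙) sgn(x)ᵀ, where 𝟙 ∈ ℝ^K is the all-ones vector. -/
open Finset Filter

/-- on the orthogonal scale-skewed data `x = α e_y`, the entry-wise sign
of the per-sample cross-entropy gradient is independent of `W` and `α`: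
`sgn((S(Wx) − e_y) xᵀ) = (𝟙 − 2e_y) e_yᵀ`, equivalently
`−sgn((S(Wx) − e_y) xᵀ) = (2e_y − 𝟙) sgn(x)ᵀ`. -/
theorem sign_of_per_sample_gradient (K : ℕ) (hK : 2 ≤ K) (y : Fin K)
    (α : ℝ) (hα : 0 < α) :
    ∀ W : Fin K → Fin K → ℝ, ∀ cc jj : Fin K,
      (Real.sign (sampleGrad (fun j => if j = y then α else 0) y W cc jj)
          = (1 - 2 * (if cc = y then (1 : ℝ) else 0)) * (if jj = y then 1 else 0))
      ∧ (-(Real.sign (sampleGrad (fun j => if j = y then α else 0) y W cc jj))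
          = (2 * (if cc = y then (1 : ℝ) else 0) - 1)
            * Real.sign (if jj = y then α else 0)) := by
  intro W cc jj
  have hpos : 0 < softmax (logits W fun j => if j = y then α else 0) cc := by
    unfold softmax
    exact div_pos (Real.exp_pos _) (Finset.sum_pos (fun j _ => Real.exp_pos _) ⟨y, by simp⟩)
  have hlt : softmax (logits W fun j => if j = y then α else 0) cc < 1 := by
    unfold softmax
    rw [div_lt_one (Finset.sum_pos (fun j _ => Real.exp_pos _) ⟨y, by simp⟩)]
    obtain ⟨c', hc'⟩ := Fintype.exists_ne_of_one_lt_card (by simpa using (by omega : 1 < K)) cc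
    exact Finset.single_lt_sum hc' (Finset.mem_univ _)
      (Finset.mem_univ _) (Real.exp_pos _) (fun j _ _ => (Real.exp_pos _).le)
  have key : Real.sign (sampleGrad (fun j => if j = y then α else 0) y W cc jj)
      = (1 - 2 * (if cc = y then (1 : ℝ) else 0)) * (if jj = y then 1 else 0) := by
    unfold sampleGrad
    by_cases hj : jj = y
    · simp only [hj, eq_self_iff_true, if_true]
      by_cases hc : cc = y
      · simp only [hc, eq_self_iff_true, if_true]
        rw [Real.sign_of_neg (mul_neg_of_neg_of_pos (by rw [hc] at hlt; linarith) hα)]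
        norm_num
      · simp only [if_neg hc]
        rw [Real.sign_of_pos (mul_pos (by linarith [hpos]) hα)]
        norm_num
    · simp [hj, Real.sign_zero]
  refine ⟨key, ?_⟩
  rw [key]
  by_cases hj : jj = y
  · simp only [hj, eq_self_iff_true, if_true, Real.sign_of_pos hα]; ring
  · simp [hj, Real.sign_zero]
end

section
/- Let K ≥ 2 and n ≥ 1. Consider training data in ℝ^K given by x_i = α_i e_{y_i} with scales α_i > 0 and labels y_i ∈ {1,…,K} for i = 1,…,n, where every class appears (the map i ↦ y_i is surjective onto {1,…,K}). Fix c > 0 and a ∈ (0,1], and set η_t = c·t^{−a} for t ≥ 1. For each epoch r ∈ ℕ let σ_r be an arbitrary permutation of {1,…,n}, and define the sample index at step t ≥ 1 by i_t = σ_r(k+1), where t − 1 = r·n + k with 0 ≤ k < n. Define the per-sample SignSGD iterates W_0 = 0 ∈ ℝ^{K×K} and W_t = W_{t−1} − η_t · sgn((S(W_{t−1} x_{i_t}) − e_{y_{i_t}}) x_{i_t}ᵀ) for t ≥ 1. Let W̄ = ∑_{i=1}^n (2e_{y_i} − 𝟙) e_{y_i}ᵀ. Then: (1) the cross-entropy training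 loss converges to zero, lim_{t→∞} L(W_t) = 0; and (2) the iterate direction converges, lim_{t→∞} W_t / ‖W_t‖_F = W̄ / ‖W̄‖_F in Frobenius norm. -/
open Finset Filter

lemma abel_bound (g d : ℕ → ℝ) (C : ℝ)
    (hg0 : ∀ s, 0 ≤ g s) (hganti : ∀ s, g (s+1) ≤ g s)
    (hD : ∀ t, |∑ s ∈ Finset.range t, d s| ≤ C) :
    ∀ t, |∑ s ∈ Finset.range t, g s * d s| ≤ C * g 0 := by
  have hg0le : ∀ s, g s ≤ g 0 := by
    intro s; induction s with
    | zero => exact le_refl _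
    | succ m ih => exact le_trans (hganti m) ih
  have hC : 0 ≤ C := le_trans (abs_nonneg _) (hD 0)
  have key : ∀ t, |(∑ s ∈ Finset.range t, g s * d s) - g t * ∑ s ∈ Finset.range t, d s|
      ≤ C * (g 0 - g t) := by
    intro t; induction t with
    | zero => simp
    | succ m ih =>
      have h2 : (∑ s ∈ Finset.range (m+1), g s * d s) - g (m+1) * ∑ s ∈ Finset.range (m+1), d s
          = ((∑ s ∈ Finset.range m, g s * d s) - g m * ∑ s ∈ Finset.range m, d s)
            + (g m - g (m+1)) * ∑ s ∈ Finset.range (m+1), d s := by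
        rw [Finset.sum_range_succ, Finset.sum_range_succ (f := d)]; ring
      rw [h2]
      calc _ ≤ |(∑ s ∈ Finset.range m, g s * d s) - g m * ∑ s ∈ Finset.range m, d s|
            + |(g m - g (m+1)) * ∑ s ∈ Finset.range (m+1), d s| := abs_add_le _ _
        _ ≤ C * (g 0 - g m) + (g m - g (m+1)) * C := by
            refine add_le_add ih ?_
            rw [abs_mul, abs_of_nonneg (by linarith [hganti m])]
            exact mul_le_mul_of_nonneg_left (hD _) (by linarith [hganti m])
        _ = C * (g 0 - g (m+1)) := by ring
  intro t
  calc |∑ s ∈ Finset.range t, g s * d s|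
      ≤ |(∑ s ∈ Finset.range t, g s * d s) - g t * ∑ s ∈ Finset.range t, d s|
        + |g t * ∑ s ∈ Finset.range t, d s| := by
        have h3 := abs_add_le ((∑ s ∈ Finset.range t, g s * d s) - g t * ∑ s ∈ Finset.range t, d s)
          (g t * ∑ s ∈ Finset.range t, d s)
        simpa using h3
    _ ≤ C * (g 0 - g t) + g t * C := by
        refine add_le_add (key t) ?_
        rw [abs_mul, abs_of_nonneg (hg0 t)]
        exact mul_le_mul_of_nonneg_left (hD _) (hg0 t)
    _ ≤ C * g 0 := by nlinarith [hg0 t, hg0 0, hC]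

lemma tendsto_softmax_ratio (m : ℝ) :
    Filter.Tendsto (fun u : ℝ => Real.exp u / (Real.exp u + m * Real.exp (-u)))
      Filter.atTop (nhds 1) := by
  have heq : ∀ u : ℝ, Real.exp u / (Real.exp u + m * Real.exp (-u))
      = (1 + m * Real.exp (-(2*u)))⁻¹ := by
    intro u
    have hden : Real.exp u + m * Real.exp (-u)
        = Real.exp u * (1 + m * Real.exp (-(2*u))) := by
      have e1 : Real.exp u * (m * Real.exp (-(2*u))) = m * Real.exp (-u) := by
        rw [mul_comm m, ← mul_assoc, ← Real.exp_add]
        ring_nf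
      rw [mul_add, mul_one, e1]
    rw [hden, div_mul_eq_div_div, div_self (Real.exp_ne_zero u), one_div]
  simp only [heq]
  have h1 : Filter.Tendsto (fun u : ℝ => Real.exp (-(2*u))) Filter.atTop (nhds 0) := by
    apply Real.tendsto_exp_atBot.comp
    have h0 : Filter.Tendsto (fun u : ℝ => 2 * u) Filter.atTop Filter.atTop :=
      (tendsto_const_mul_atTop_of_pos (by norm_num : (0:ℝ) < 2)).mpr tendsto_id
    simpa using tendsto_neg_atBot_iff.mpr h0
  have h2 : Filter.Tendsto (fun u : ℝ => 1 + m * Real.exp (-(2*u))) Filter.atTop (nhds 1) := by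
    have h3 := (h1.const_mul m).const_add 1
    simpa using h3
  have h4 := h2.inv₀ (by norm_num)
  simpa using h4

lemma frob_eps {K : ℕ} (v : Fin K → ℝ) :
    Real.sqrt (∑ cc : Fin K, ∑ jj : Fin K, ((if cc = jj then (1:ℝ) else -1) * v jj)^2)
      = Real.sqrt ((K:ℝ) * ∑ jj, v jj^2) := by
  congr 1
  rw [Finset.sum_comm, Finset.mul_sum]
  refine Finset.sum_congr rfl (fun jj _ => ?_)
  have h1 : ∀ cc : Fin K, ((if cc = jj then (1:ℝ) else -1) * v jj)^2 = v jj^2 := by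
    intro cc; split <;> ring
  simp only [h1]
  rw [Finset.sum_const, Finset.card_univ, Fintype.card_fin, nsmul_eq_mul]

lemma frac_normalize_eq {K : ℕ} (kk : ℝ) (hkk : 0 ≤ kk) (v : Fin K → ℝ) (h : ℝ) (hh : 0 < h)
    (j : Fin K) :
    v j / Real.sqrt (kk * ∑ l, v l^2) = (v j / h) / Real.sqrt (kk * ∑ l, (v l / h)^2) := by
  have h1 : ∑ l, (v l / h)^2 = (∑ l, v l^2) / h^2 := by
    rw [Finset.sum_div]; exact Finset.sum_congr rfl (fun l _ => by rw [div_pow])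
  have h2 : kk * ((∑ l, v l^2) / h^2) = (kk * ∑ l, v l^2) / h^2 := by ring
  have h3 : Real.sqrt ((kk * ∑ l, v l^2) / h^2) = Real.sqrt (kk * ∑ l, v l^2) / h := by
    rw [Real.sqrt_div (by positivity), Real.sqrt_sq hh.le]
  rw [h1, h2, h3]
  rcases eq_or_ne (Real.sqrt (kk * ∑ l, v l^2)) 0 with hS | hS
  · simp [hS]
  · field_simp


/-- on the orthogonal scale-skewed dataset, per-sample SignSGD with
random reshuffling and step sizes `η_t = c t^{−a}` drives the cross-entropy loss to
zero, and the iterate direction converges (in Frobenius norm) to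
`W̄/‖W̄‖_F` where `W̄ = ∑ᵢ (2e_{yᵢ} − 𝟙) e_{yᵢ}ᵀ`. -/
theorem persample_signsgd_implicit_bias (K n : ℕ) (hK : 2 ≤ K) (hn : 1 ≤ n)
    (α : Fin n → ℝ) (hα : ∀ i, 0 < α i)
    (y : Fin n → Fin K) (hy : Function.Surjective y)
    (x : Fin n → Fin K → ℝ) (hx : ∀ i j, x i j = if j = y i then α i else 0)
    (c a : ℝ) (hc : 0 < c) (ha0 : 0 < a) (ha1 : a ≤ 1)
    (η : ℕ → ℝ) (hη : ∀ t : ℕ, 1 ≤ t → η t = c * (t : ℝ) ^ (-a))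
    (σ : ℕ → Equiv.Perm (Fin n))
    (idx : ℕ → Fin n)
    (hidx : ∀ t : ℕ, 1 ≤ t →
      idx t = σ ((t - 1) / n) ⟨(t - 1) % n, Nat.mod_lt _ (by omega)⟩)
    (Wseq : ℕ → Fin K → Fin K → ℝ)
    (hW0 : Wseq 0 = 0)
    (hWrec : ∀ t : ℕ, 1 ≤ t → ∀ cc jj : Fin K,
      Wseq t cc jj = Wseq (t - 1) cc jj
        - η t * Real.sign (sampleGrad (x (idx t)) (y (idx t)) (Wseq (t - 1)) cc jj))
    (Wbar : Fin K → Fin K → ℝ)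
    (hWbar : ∀ cc jj, Wbar cc jj
      = ∑ i, (2 * (if cc = y i then (1 : ℝ) else 0) - 1) * (if jj = y i then 1 else 0)) :
    Filter.Tendsto (fun t => lossCE x y (Wseq t)) Filter.atTop (nhds 0)
    ∧ Filter.Tendsto
        (fun t => frobNorm ((frobNorm (Wseq t))⁻¹ • Wseq t - (frobNorm Wbar)⁻¹ • Wbar))
        Filter.atTop (nhds 0) := by
  have npos : 0 < n := hn
  have nR : (0:ℝ) < n := by exact_mod_cast npos
  -- counts
  set N : Fin K → ℕ := fun j => (Finset.univ.filter (fun i => y i = j)).card with hN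
  have hN1 : ∀ j, 1 ≤ N j := by
    intro j
    obtain ⟨i, hi⟩ := hy j
    exact Finset.card_pos.mpr ⟨i, Finset.mem_filter.mpr ⟨Finset.mem_univ _, hi⟩⟩
  have hNn : ∀ j, N j ≤ n := by
    intro j
    simpa using Finset.card_filter_le Finset.univ (fun i => y i = j)
  -- step sizes
  have hηpos : ∀ s : ℕ, 0 < η (s+1) := by
    intro s
    rw [hη (s+1) (by omega)]
    have : (0:ℝ) < ((s+1:ℕ):ℝ) := by positivity
    positivity
  have hηanti : ∀ s : ℕ, η (s+1+1) ≤ η (s+1) := by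
    intro s
    rw [hη (s+1) (by omega), hη (s+1+1) (by omega)]
    have h1 : (1:ℝ) ≤ ((s+1:ℕ):ℝ) := by exact_mod_cast Nat.succ_le_succ (Nat.zero_le s)
    have h2 : ((s+1:ℕ):ℝ) ≤ ((s+1+1:ℕ):ℝ) := by exact_mod_cast Nat.le_succ _
    have hb1 : (0:ℝ) < ((s+1:ℕ):ℝ) := by linarith
    rw [Real.rpow_neg (by linarith), Real.rpow_neg (by linarith)]
    apply mul_le_mul_of_nonneg_left _ hc.le
    apply inv_anti₀ (Real.rpow_pos_of_pos hb1 a)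
    exact Real.rpow_le_rpow hb1.le h2 ha0.le
  have hη1 : η 1 = c := by
    rw [hη 1 le_rfl]; simp
  -- indicator and sums
  set f : Fin K → ℕ → ℝ := fun j s => if y (idx (s+1)) = j then (1:ℝ) else 0 with hf
  set A : Fin K → ℕ → ℝ := fun j t => ∑ s ∈ Finset.range t, η (s+1) * f j s with hA
  set H : ℕ → ℝ := fun t => ∑ s ∈ Finset.range t, η (s+1) with hH
  -- the index at 0-based step s
  have hidx' : ∀ s : ℕ, idx (s+1) = σ (s / n) ⟨s % n, Nat.mod_lt _ npos⟩ := by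
    intro s
    rw [hidx (s+1) (by omega)]
    simp
  -- epoch sums
  have h_epoch : ∀ (j : Fin K) (r : ℕ),
      ∑ s ∈ Finset.Ico (r*n) (r*n+n), f j s = (N j : ℝ) := by
    intro j r
    have hto : ∑ s ∈ Finset.Ico (r*n) (r*n+n), f j s
        = ∑ i : Fin n, (if y i = j then (1:ℝ) else 0) := by
      apply Finset.sum_nbij' (i := fun s => σ r ⟨s % n, Nat.mod_lt _ npos⟩)
        (j := fun i => r*n + ((σ r).symm i : ℕ))
      · intro s hs; exact Finset.mem_univ _
      · intro i hi
        simp only [Finset.mem_Ico]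
        constructor
        · omega
        · have := (((σ r).symm i)).isLt; omega
      · intro s hs
        simp only [Finset.mem_Ico] at hs
        have hmod : s % n = s - r*n := by
          have h2 : s - r*n < n := by omega
          conv_lhs => rw [show s = (s - r*n) + r*n by omega]
          rw [Nat.add_mul_mod_self_right, Nat.mod_eq_of_lt h2]
        have h3 : ((σ r).symm (σ r ⟨s % n, Nat.mod_lt _ npos⟩) : ℕ) = s % n := by
          simp
        rw [h3, hmod]; omega
      · intro i hi
        have hmod : (r*n + ((σ r).symm i : ℕ)) % n = ((σ r).symm i : ℕ) := by
          rw [Nat.add_comm, Nat.add_mul_mod_self_right]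
          exact Nat.mod_eq_of_lt ((σ r).symm i).isLt
        have : (⟨(r*n + ((σ r).symm i : ℕ)) % n, Nat.mod_lt _ npos⟩ : Fin n)
            = (σ r).symm i := by
          apply Fin.ext; simp [hmod]
        simp [this, Nat.mod_eq_of_lt ((σ r).symm i).isLt]
      · intro s hs
        simp only [Finset.mem_Ico] at hs
        have hdiv : s / n = r := by
          have h2 : s - r*n < n := by omega
          conv_lhs => rw [show s = (s - r*n) + r*n by omega]
          rw [Nat.add_mul_div_right _ _ npos, Nat.div_eq_of_lt h2]
          exact Nat.zero_add r
        simp only [hf, hidx', hdiv]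
    rw [hto]
    simp [hN, Finset.sum_boole]
  -- partial-sum bound
  have h_D : ∀ (j : Fin K) (t : ℕ),
      |∑ s ∈ Finset.range t, (f j s - (N j : ℝ)/n)| ≤ (n:ℝ) := by
    intro j t
    have h_zero : ∀ q : ℕ, ∑ s ∈ Finset.range (q*n), (f j s - (N j : ℝ)/n) = 0 := by
      intro q
      induction q with
      | zero => simp
      | succ m ih =>
        have hsplit : Finset.range ((m+1)*n) =
            Finset.range (m*n) ∪ Finset.Ico (m*n) (m*n+n) := by
          rw [Finset.range_eq_Ico, Finset.range_eq_Ico,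
            Finset.Ico_union_Ico_eq_Ico (Nat.zero_le _) (by omega : m*n ≤ m*n+n)]
          congr 1; ring
        rw [hsplit, Finset.sum_union (by
          rw [Finset.range_eq_Ico]
          exact Finset.Ico_disjoint_Ico_consecutive 0 (m*n) (m*n+n))]
        rw [ih, Finset.sum_sub_distrib, h_epoch j m, Finset.sum_const, Nat.card_Ico]
        simp only [zero_add]
        have : (m*n+n) - m*n = n := by omega
        rw [this, nsmul_eq_mul]
        field_simp
        ring
    have hle : t/n*n ≤ t := Nat.div_mul_le_self t n
    have h1 : t % n + t/n * n = t := by simpa [mul_comm] using Nat.mod_add_div t n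
    have hsplit : Finset.range t = Finset.range ((t/n)*n) ∪ Finset.Ico ((t/n)*n) t := by
      rw [Finset.range_eq_Ico, Finset.range_eq_Ico, Finset.Ico_union_Ico_eq_Ico (Nat.zero_le _) hle]
    rw [hsplit, Finset.sum_union (by
      rw [Finset.range_eq_Ico]
      exact Finset.Ico_disjoint_Ico_consecutive 0 _ t)]
    rw [h_zero (t/n), zero_add]
    calc |∑ s ∈ Finset.Ico ((t/n)*n) t, (f j s - (N j : ℝ)/n)|
        ≤ ∑ s ∈ Finset.Ico ((t/n)*n) t, |f j s - (N j : ℝ)/n| :=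
          Finset.abs_sum_le_sum_abs _ _
      _ ≤ ∑ s ∈ Finset.Ico ((t/n)*n) t, 1 := by
          apply Finset.sum_le_sum
          intro s hs
          have hb1 : (0:ℝ) ≤ (N j : ℝ)/n := by positivity
          have hb2 : (N j : ℝ)/n ≤ 1 := by
            rw [div_le_one nR]; exact_mod_cast hNn j
          simp only [hf]
          split <;> (rw [abs_le]; constructor <;> linarith)
      _ ≤ (n:ℝ) := by
          rw [Finset.sum_const, Nat.card_Ico, nsmul_eq_mul, mul_one]
          have h2 : t - (t/n)*n = t % n := by omega
          rw [h2]
          exact_mod_cast (Nat.mod_lt t npos).le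
  -- softmax bounds
  have hsm_pos : ∀ (z : Fin K → ℝ) (cc : Fin K), 0 < softmax z cc := by
    intro z cc
    apply div_pos (Real.exp_pos _)
    exact Finset.sum_pos (fun j _ => Real.exp_pos _) ⟨cc, Finset.mem_univ _⟩
  have hsm_lt : ∀ (z : Fin K → ℝ) (cc : Fin K), softmax z cc < 1 := by
    intro z cc
    rw [softmax, div_lt_one (Finset.sum_pos (fun j _ => Real.exp_pos _) ⟨cc, Finset.mem_univ _⟩)]
    obtain ⟨c', hc'⟩ := Fintype.exists_ne_of_one_lt_card (by simp; omega) cc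
    exact Finset.single_lt_sum hc' (Finset.mem_univ _) (Finset.mem_univ _)
      (Real.exp_pos _) (fun _ _ _ => (Real.exp_pos _).le)
  -- sign of the per-sample gradient
  have h_sign : ∀ (i : Fin n) (W : Fin K → Fin K → ℝ) (cc jj : Fin K),
      Real.sign (sampleGrad (x i) (y i) W cc jj)
        = if y i = jj then (if cc = y i then (-1:ℝ) else 1) else 0 := by
    intro i W cc jj
    simp only [sampleGrad, hx]
    by_cases hj : jj = y i
    · rw [if_pos hj, if_pos hj.symm]
      by_cases hcy : cc = y i
      · rw [if_pos hcy, if_pos hcy]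
        have h1 : softmax (logits W (x i)) cc < 1 := hsm_lt _ _
        exact Real.sign_of_neg (mul_neg_of_neg_of_pos (by linarith) (hα i))
      · rw [if_neg hcy, if_neg hcy]
        have h1 : 0 < softmax (logits W (x i)) cc := hsm_pos _ _
        exact Real.sign_of_pos (mul_pos (by linarith) (hα i))
    · rw [if_neg hj, if_neg (show ¬ y i = jj from fun h => hj h.symm)]
      simp
  -- closed form of the iterates
  have h_closed : ∀ (t : ℕ) (cc jj : Fin K),
      Wseq t cc jj = (if cc = jj then (1:ℝ) else -1) * A jj t := by
    intro t
    induction t with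
    | zero => intro cc jj; simp [hW0, hA]
    | succ m ih =>
      intro cc jj
      have hrec := hWrec (m+1) (by omega) cc jj
      simp only [Nat.add_sub_cancel] at hrec
      rw [hrec, h_sign, ih]
      have hAsucc : A jj (m+1) = A jj m + η (m+1) * f jj m := by
        simp only [hA]; rw [Finset.sum_range_succ]
      rw [hAsucc]
      simp only [hf]
      by_cases hj : y (idx (m+1)) = jj
      · simp only [hj, eq_self_iff_true, if_true]
        by_cases hcy : cc = jj
        · simp only [hcy, eq_self_iff_true, if_true]; ring
        · simp only [if_neg hcy]; ring
      · simp only [if_neg hj]; ring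
  -- Abel bound: A j t stays close to (N j / n) * H t
  have h_B : ∀ (j : Fin K) (t : ℕ), |A j t - (N j : ℝ)/n * H t| ≤ n * c := by
    intro j t
    have hsum : A j t - (N j : ℝ)/n * H t
        = ∑ s ∈ Finset.range t, (fun s => η (s+1)) s * (fun s => f j s - (N j : ℝ)/n) s := by
      simp only [hA, hH]
      rw [Finset.mul_sum, ← Finset.sum_sub_distrib]
      exact Finset.sum_congr rfl (fun s _ => by ring)
    rw [hsum]
    have hab := abel_bound (fun s => η (s+1)) (fun s => f j s - (N j:ℝ)/n) n
      (fun s => (hηpos s).le) hηanti (h_D j) t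
    rw [hη1] at hab
    linarith [hab]
  -- divergence of H
  have h_H_top : Tendsto H atTop atTop := by
    have hlow : ∀ t, c * ∑ s ∈ Finset.range t, (1:ℝ)/(s+1) ≤ H t := by
      intro t
      simp only [hH]
      rw [Finset.mul_sum]
      apply Finset.sum_le_sum
      intro s _
      rw [hη (s+1) (by omega)]
      apply mul_le_mul_of_nonneg_left _ hc.le
      have hb : (1:ℝ) ≤ ((s+1:ℕ):ℝ) := by exact_mod_cast Nat.succ_le_succ (Nat.zero_le s)
      calc (1:ℝ)/((s:ℝ)+1) = ((s+1:ℕ):ℝ) ^ (-1:ℝ) := by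
            rw [Real.rpow_neg_one]; push_cast; rw [one_div]
        _ ≤ ((s+1:ℕ):ℝ) ^ (-a) := Real.rpow_le_rpow_of_exponent_le hb (by linarith)
    apply tendsto_atTop_mono hlow
    exact Tendsto.const_mul_atTop hc Real.tendsto_sum_range_one_div_nat_succ_atTop
  have h_Hpos : ∀ t : ℕ, 1 ≤ t → 0 < H t := by
    intro t ht
    simp only [hH]
    exact Finset.sum_pos (fun s _ => hηpos s) (Finset.nonempty_range_iff.mpr (by omega))
  -- ratio convergence
  have h_ratio : ∀ j, Tendsto (fun t => A j t / H t) atTop (nhds ((N j:ℝ)/n)) := by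
    intro j
    have hzero : Tendsto (fun t => A j t / H t - (N j:ℝ)/n) atTop (nhds 0) := by
      refine squeeze_zero_norm' ?_
        ((tendsto_const_nhds.div_atTop h_H_top :
          Tendsto (fun t => ((n:ℝ)*c) / H t) atTop (nhds 0)))
      · filter_upwards [eventually_ge_atTop 1] with t ht
        have hHt := h_Hpos t ht
        rw [Real.norm_eq_abs]
        have heq : A j t / H t - (N j:ℝ)/n = (A j t - (N j:ℝ)/n * H t)/H t := by
          field_simp
        rw [heq, abs_div, abs_of_pos hHt]
        exact (div_le_div_iff_of_pos_right hHt).mpr (h_B j t)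
    have h2 := hzero.add_const ((N j:ℝ)/n)
    simpa using h2
  -- divergence of A j
  have h_A_top : ∀ j, Tendsto (fun t => A j t) atTop atTop := by
    intro j
    have hNpos : (0:ℝ) < (N j:ℝ)/n := div_pos (by exact_mod_cast hN1 j) nR
    have hlow : ∀ t, (N j:ℝ)/n * H t + -(n*c) ≤ A j t := by
      intro t
      have hb := h_B j t
      rw [abs_le] at hb
      linarith [hb.1]
    apply tendsto_atTop_mono hlow
    exact tendsto_atTop_add_const_right _ _ (Tendsto.const_mul_atTop hNpos h_H_top)
  -- logits closed form
  have h_logits : ∀ (t : ℕ) (i : Fin n) (cc : Fin K),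
      logits (Wseq t) (x i) cc = (if cc = y i then (1:ℝ) else -1) * (α i * A (y i) t) := by
    intro t i cc
    simp only [logits, hx]
    rw [Finset.sum_eq_single (y i)]
    · rw [if_pos rfl, h_closed]; ring
    · intro b _ hb; rw [if_neg hb, mul_zero]
    · intro hmem; exact absurd (Finset.mem_univ _) hmem
  -- softmax closed form
  have h_soft : ∀ (t : ℕ) (i : Fin n),
      softmax (logits (Wseq t) (x i)) (y i)
        = Real.exp (α i * A (y i) t)
          / (Real.exp (α i * A (y i) t) + ((K:ℝ)-1) * Real.exp (-(α i * A (y i) t))) := by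
    intro t i
    set u := α i * A (y i) t with hu
    have hexp : ∀ cc, Real.exp (logits (Wseq t) (x i) cc)
        = if cc = y i then Real.exp u else Real.exp (-u) := by
      intro cc; rw [h_logits]
      by_cases hcc : cc = y i
      · rw [if_pos hcc, if_pos hcc, one_mul]
      · rw [if_neg hcc, if_neg hcc]; norm_num [hu]
    have hden : ∑ cc : Fin K, (if cc = y i then Real.exp u else Real.exp (-u))
        = Real.exp u + ((K:ℝ)-1) * Real.exp (-u) := by
      rw [Finset.sum_ite, Finset.sum_const, Finset.sum_const]
      rw [Finset.filter_eq', if_pos (Finset.mem_univ _), Finset.filter_ne']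
      rw [Finset.card_singleton, Finset.card_erase_of_mem (Finset.mem_univ _)]
      rw [Finset.card_univ, Fintype.card_fin, one_smul, nsmul_eq_mul]
      rw [Nat.cast_sub (by omega), Nat.cast_one]
    rw [softmax]
    simp only [hexp]
    rw [hden]
    simp only [if_true]
  -- loss convergence
  have hloss : Tendsto (fun t => lossCE x y (Wseq t)) atTop (nhds 0) := by
    have hterm : ∀ i : Fin n, Tendsto
        (fun t => Real.log (softmax (logits (Wseq t) (x i)) (y i))) atTop (nhds 0) := by
      intro i
      have hu : Tendsto (fun t => α i * A (y i) t) atTop atTop :=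
        Tendsto.const_mul_atTop (hα i) (h_A_top (y i))
      have hs : Tendsto (fun t => softmax (logits (Wseq t) (x i)) (y i)) atTop (nhds 1) := by
        have hcomp := (tendsto_softmax_ratio ((K:ℝ)-1)).comp hu
        exact hcomp.congr (fun t => (h_soft t i).symm)
      have hlog := (Real.continuousAt_log (by norm_num : (1:ℝ) ≠ 0)).tendsto.comp hs
      simpa [Real.log_one, Function.comp_def] using hlog
    have hsum : Tendsto (fun t => ∑ i, Real.log (softmax (logits (Wseq t) (x i)) (y i)))
        atTop (nhds 0) := by
      have h4 := tendsto_finset_sum Finset.univ (fun (i : Fin n) _ => hterm i)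
      simpa using h4
    have h5 := hsum.const_mul (-((1:ℝ)/(n:ℝ)))
    simp only [lossCE]
    simpa using h5
  -- Wbar closed form
  set Nr : Fin K → ℝ := fun j => (N j : ℝ) with hNr
  have hWbar_entry : ∀ cc jj, Wbar cc jj = (if cc = jj then (1:ℝ) else -1) * Nr jj := by
    intro cc jj
    rw [hWbar]
    have hterm : ∀ i : Fin n,
        (2 * (if cc = y i then (1:ℝ) else 0) - 1) * (if jj = y i then 1 else 0)
        = (if cc = jj then (1:ℝ) else -1) * (if y i = jj then 1 else 0) := by
      intro i
      by_cases hj : y i = jj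
      · subst hj
        by_cases hcc : cc = y i <;> simp [hcc] <;> norm_num
      · have hj' : ¬ jj = y i := fun h => hj h.symm
        rw [if_neg hj', if_neg hj, mul_zero, mul_zero]
    rw [Finset.sum_congr rfl (fun i _ => hterm i), ← Finset.mul_sum]
    congr 1
    simp only [hNr, hN]
    rw [Finset.sum_boole]
  have hKR : (0:ℝ) < (K:ℝ) := by exact_mod_cast (by omega : 0 < K)
  have hFb : frobNorm Wbar = Real.sqrt ((K:ℝ) * ∑ jj, Nr jj^2) := by
    simp only [frobNorm, hWbar_entry]
    exact frob_eps Nr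
  have hF : ∀ t, frobNorm (Wseq t) = Real.sqrt ((K:ℝ) * ∑ l, (A l t)^2) := by
    intro t
    simp only [frobNorm, h_closed]
    exact frob_eps _
  have hQpos : 0 < Real.sqrt ((K:ℝ) * ∑ l, (Nr l/(n:ℝ))^2) := by
    apply Real.sqrt_pos.mpr
    apply mul_pos hKR
    apply Finset.sum_pos _ ⟨⟨0, by omega⟩, Finset.mem_univ _⟩
    intro l _
    have : (0:ℝ) < Nr l := by
      simp only [hNr]; exact_mod_cast hN1 l
    positivity
  have hlimden : Tendsto (fun t => Real.sqrt ((K:ℝ) * ∑ l, (A l t / H t)^2)) atTop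
      (nhds (Real.sqrt ((K:ℝ) * ∑ l, (Nr l/(n:ℝ))^2))) := by
    apply Filter.Tendsto.sqrt
    apply Tendsto.const_mul
    have h6 := tendsto_finset_sum Finset.univ
      (fun (l : Fin K) _ => ((h_ratio l).pow 2))
    simpa [hNr] using h6
  have hAF : ∀ jj, Tendsto (fun t => A jj t / Real.sqrt ((K:ℝ) * ∑ l, (A l t)^2))
      atTop (nhds (Nr jj / Real.sqrt ((K:ℝ) * ∑ l, Nr l^2))) := by
    intro jj
    have h1 : Tendsto (fun t => (A jj t / H t) / Real.sqrt ((K:ℝ) * ∑ l, (A l t / H t)^2))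
        atTop (nhds ((Nr jj / (n:ℝ)) / Real.sqrt ((K:ℝ) * ∑ l, (Nr l / (n:ℝ))^2))) := by
      apply Tendsto.div _ hlimden hQpos.ne'
      simpa [hNr] using h_ratio jj
    have h2 : Nr jj / Real.sqrt ((K:ℝ) * ∑ l, Nr l^2)
        = (Nr jj / (n:ℝ)) / Real.sqrt ((K:ℝ) * ∑ l, (Nr l / (n:ℝ))^2) :=
      frac_normalize_eq (K:ℝ) hKR.le Nr (n:ℝ) nR jj
    rw [h2]
    apply h1.congr'
    filter_upwards [eventually_ge_atTop 1] with t ht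
    exact (frac_normalize_eq (K:ℝ) hKR.le (fun l => A l t) (H t) (h_Hpos t ht) jj).symm
  have hentry : ∀ cc jj, Tendsto (fun t => (frobNorm (Wseq t))⁻¹ * Wseq t cc jj
      - (frobNorm Wbar)⁻¹ * Wbar cc jj) atTop (nhds 0) := by
    intro cc jj
    have he1 : ∀ t, (frobNorm (Wseq t))⁻¹ * Wseq t cc jj
        = (if cc = jj then (1:ℝ) else -1)
          * (A jj t / Real.sqrt ((K:ℝ) * ∑ l, (A l t)^2)) := by
      intro t; rw [h_closed, hF]; ring
    have he2 : (frobNorm Wbar)⁻¹ * Wbar cc jj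
        = (if cc = jj then (1:ℝ) else -1)
          * (Nr jj / Real.sqrt ((K:ℝ) * ∑ l, Nr l^2)) := by
      rw [hWbar_entry, hFb]; ring
    simp only [he1, he2]
    have hsub : Tendsto (fun t => A jj t / Real.sqrt ((K:ℝ) * ∑ l, (A l t)^2)
        - Nr jj / Real.sqrt ((K:ℝ) * ∑ l, Nr l^2)) atTop (nhds 0) := by
      have h9 := (hAF jj).sub
        (tendsto_const_nhds
          (x := Nr jj / Real.sqrt ((K:ℝ) * ∑ l, Nr l^2)) (f := (atTop : Filter ℕ)))
      rw [sub_self] at h9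
      exact h9
    have h3 := hsub.const_mul (if cc = jj then (1:ℝ) else -1)
    simp only [mul_zero] at h3
    refine h3.congr (fun t => ?_)
    ring
  refine ⟨hloss, ?_⟩
  have hsum2 : Tendsto (fun t => ∑ cc : Fin K, ∑ jj : Fin K,
      ((frobNorm (Wseq t))⁻¹ * Wseq t cc jj - (frobNorm Wbar)⁻¹ * Wbar cc jj)^2)
      atTop (nhds 0) := by
    have h7 := tendsto_finset_sum (Finset.univ : Finset (Fin K))
      (fun cc _ => tendsto_finset_sum (Finset.univ : Finset (Fin K))
        (fun jj _ => ((hentry cc jj).pow 2)))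
    simpa using h7
  have hsqrt := hsum2.sqrt
  simp only [frobNorm, Pi.sub_apply, Pi.smul_apply, smul_eq_mul]
  simpa [Real.sqrt_zero, frobNorm] using hsqrt
end
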